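/- Under the hypotheses of the one-step inequality of Tseng's method, if additionally λ_{n+1} ≤ μ‖z_n − w_n‖/‖F(z_n) − F(w_n)‖ (with F(z_n) ≠ F(w_n)) and λ_{n+1} ≥ λ_n, μ ∈ (0,1), then ‖z_{n+1} − x*‖² ≤ ‖z_n − x*‖² − (1 − μ²)‖w_n − z_n‖². -/
import Mathlib


open scoped RealInnerProductSpace

/-- Under the hypotheses of the one-step inequality of Tseng's method, if additionally
`λ_{n+1} ≤ μ ‖z_n - w_n‖ / ‖F z_n - F w_n‖` (with `F z_n ≠ F w_n`) and
`λ_n ≤ λ_{n+1}`, `μ ∈ (0,1)`, then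
`‖z_{n+1} - x*‖² ≤ ‖z_n - x*‖² - (1 - μ²) ‖w_n - z_n‖²`. -/
theorem stmt_16 {H : Type*} [NormedAddCommGroup H] [InnerProductSpace ℝ H] [CompleteSpace H]
    (C : Set H) (hCne : C.Nonempty) (hCc : IsClosed C) (hC : Convex ℝ C)
    (F : H → H) (zn wn zn1 x : H) (lam lam' μ : ℝ)
    (hμ : μ ∈ Set.Ioo (0 : ℝ) 1) (hlam : 0 < lam) (hlam' : 0 < lam')
    (hwn : wn ∈ C)
    (hwnproj : ∀ u ∈ C, ⟪zn - lam • F zn - wn, u - wn⟫ ≤ 0)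
    (hzn1 : zn1 = wn + lam • (F zn - F wn))
    (hx : x ∈ C) (hxineq : 0 ≤ ⟪F wn, wn - x⟫)
    (hne : F (zn) ≠ F (wn))
    (hstep : lam' ≤ μ * ‖zn - wn‖ / ‖F zn - F wn‖)
    (hmono : lam ≤ lam') :
    ‖zn1 - x‖ ^ 2 ≤ ‖zn - x‖ ^ 2 - (1 - μ ^ 2) * ‖wn - zn‖ ^ 2 := by
  obtain ⟨hμ0, hμ1⟩ := hμ
  set d := F zn - F wn with hd
  have hdpos : (0 : ℝ) < ‖d‖ := by
    rw [hd, norm_pos_iff, sub_ne_zero]; exact hne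
  -- step size bound
  have h5 : lam * ‖d‖ ≤ μ * ‖zn - wn‖ := by
    have := (le_div_iff₀ hdpos).mp hstep
    nlinarith
  have hnrev : ‖zn - wn‖ = ‖wn - zn‖ := norm_sub_rev _ _
  have h5' : lam ^ 2 * ‖d‖ ^ 2 ≤ μ ^ 2 * ‖wn - zn‖ ^ 2 := by
    rw [← hnrev]
    nlinarith [norm_nonneg (zn - wn), mul_pos hlam hdpos]
  -- expand ‖zn1 - x‖²
  have h1 : ‖zn1 - x‖ ^ 2
      = ‖wn - x‖ ^ 2 + 2 * (lam * ⟪wn - x, d⟫) + lam ^ 2 * ‖d‖ ^ 2 := by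
    have : zn1 - x = (wn - x) + lam • d := by rw [hzn1]; abel
    rw [this, norm_add_sq_real, real_inner_smul_right, norm_smul, Real.norm_eq_abs,
      mul_pow, sq_abs]
  -- expand ‖wn - x‖²
  have h2 : ‖wn - x‖ ^ 2
      = ‖zn - x‖ ^ 2 + 2 * ⟪zn - x, wn - zn⟫ + ‖wn - zn‖ ^ 2 := by
    have : wn - x = (zn - x) + (wn - zn) := by abel
    rw [this, norm_add_sq_real]
  have h2' : ⟪zn - x, wn - zn⟫ = ⟪wn - x, wn - zn⟫ - ‖wn - zn‖ ^ 2 := by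
    have : (zn - x : H) = (wn - x) - (wn - zn) := by abel
    rw [this, inner_sub_left, real_inner_self_eq_norm_sq]
  -- projection inequality with u = x
  have h3 : ⟪zn - lam • F zn - wn, x - wn⟫ ≤ 0 := hwnproj x hx
  have h3' : ⟪zn - wn, x - wn⟫ - lam * ⟪F zn, x - wn⟫ ≤ 0 := by
    have : (zn - lam • F zn - wn : H) = (zn - wn) - lam • F zn := by abel
    rw [this, inner_sub_left, real_inner_smul_left] at h3
    linarith
  -- inner product identities
  have e1 : ⟪wn - x, d⟫ = -⟪F zn, x - wn⟫ + ⟪F wn, x - wn⟫ := by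
    rw [hd, inner_sub_right]
    have a1 : ⟪wn - x, F zn⟫ = -⟪F zn, x - wn⟫ := by
      rw [real_inner_comm, ← inner_neg_right]; congr 1; abel
    have a2 : ⟪wn - x, F wn⟫ = -⟪F wn, x - wn⟫ := by
      rw [real_inner_comm, ← inner_neg_right]; congr 1; abel
    rw [a1, a2]; ring
  have e2 : ⟪wn - x, wn - zn⟫ = ⟪zn - wn, x - wn⟫ := by
    rw [show (wn - x : H) = -(x - wn) from by abel,
      show (wn - zn : H) = -(zn - wn) from by abel, inner_neg_neg, real_inner_comm]
  have e3 : ⟪F wn, x - wn⟫ = -⟪F wn, wn - x⟫ := by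
    rw [← inner_neg_right]; congr 1; abel
  nlinarith [h1, h2, h2', h3', e1, e2, e3, h5', hxineq, mul_pos hlam hdpos]
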